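/- Let T be a finite nonempty type and let Q_1, Q_2 be strictly positive probability distributions on T. Define the indicator weights I_1(x) = 1 if Q_1(x) > Q_2(x) and I_1(x) = 0 otherwise, and I_2(x) = 1 − I_1(x). Then the unique probability distribution P on T minimizing D_KL^{I_2}(P‖Q_1) + D_KL^{I_1}(P‖Q_2) is the intersection distribution P*(x) = min(Q_1(x), Q_2(x)) / ∑_{y ∈ T} min(Q_1(y), Q_2(y)). -/

import Mathlib

open Finset

/-- Pointwise Gibbs inequality, strict version. -/
lemma gibbs_pt_lt {p q : ℝ} (hp : 0 ≤ p) (hq : 0 < q) (hne : p ≠ q) :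
    p - q < p * Real.log (p / q) := by
  rcases hp.eq_or_lt with h0 | h0
  · subst h0
    simp only [zero_mul, zero_sub]
    linarith
  · have hqp : 0 < q / p := div_pos hq h0
    have hne1 : q / p ≠ 1 := by
      intro h
      exact hne (by field_simp at h; linarith)
    have hlog : Real.log (q / p) < q / p - 1 :=
      Real.log_lt_sub_one_of_pos hqp hne1
    have hflip : Real.log (p / q) = -Real.log (q / p) := by
      rw [Real.log_div h0.ne' hq.ne', Real.log_div hq.ne' h0.ne']; ring
    rw [hflip]
    have := mul_lt_mul_of_pos_left hlog h0
    have hp' : p * (q / p - 1) = q - p := by field_simp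
    nlinarith

lemma gibbs_pt_le {p q : ℝ} (hp : 0 ≤ p) (hq : 0 < q) :
    p - q ≤ p * Real.log (p / q) := by
  rcases eq_or_ne p q with h | h
  · subst h; simp [div_self (lt_of_lt_of_le hq le_rfl).ne']
  · exact (gibbs_pt_lt hp hq h).le

/-- **Intersection operator.** With indicator weights `I₁(x) = [Q₁ x > Q₂ x]` and
`I₂ = 1 − I₁`, the unique probability distribution minimizing
`D_KL^{I₂}(P‖Q₁) + D_KL^{I₁}(P‖Q₂)` is the normalized pointwise minimum
`Pstar(x) = min (Q₁ x) (Q₂ x) / ∑ y, min (Q₁ y) (Q₂ y)`. -/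
theorem intersection_operator_optimality
    {T : Type*} [Fintype T] [Nonempty T]
    (Q₁ Q₂ : T → ℝ)
    (hQ₁pos : ∀ x, 0 < Q₁ x) (hQ₁sum : ∑ x, Q₁ x = 1)
    (hQ₂pos : ∀ x, 0 < Q₂ x) (hQ₂sum : ∑ x, Q₂ x = 1)
    (I₁ I₂ : T → ℝ)
    (hI₁ : ∀ x, I₁ x = if Q₂ x < Q₁ x then 1 else 0)
    (hI₂ : ∀ x, I₂ x = 1 - I₁ x)
    (Pstar : T → ℝ)
    (hPstar : ∀ x, Pstar x = min (Q₁ x) (Q₂ x) / ∑ y, min (Q₁ y) (Q₂ y)) :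
    ((∀ x, 0 ≤ Pstar x) ∧ ∑ x, Pstar x = 1) ∧
    (∀ P : T → ℝ, (∀ x, 0 ≤ P x) → ∑ x, P x = 1 →
      (∑ x, Pstar x * I₂ x * Real.log (Pstar x / Q₁ x))
        + (∑ x, Pstar x * I₁ x * Real.log (Pstar x / Q₂ x)) ≤
      (∑ x, P x * I₂ x * Real.log (P x / Q₁ x))
        + (∑ x, P x * I₁ x * Real.log (P x / Q₂ x))) ∧
    (∀ P : T → ℝ, (∀ x, 0 ≤ P x) → ∑ x, P x = 1 →
      (∀ P' : T → ℝ, (∀ x, 0 ≤ P' x) → ∑ x, P' x = 1 →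
        (∑ x, P x * I₂ x * Real.log (P x / Q₁ x))
          + (∑ x, P x * I₁ x * Real.log (P x / Q₂ x)) ≤
        (∑ x, P' x * I₂ x * Real.log (P' x / Q₁ x))
          + (∑ x, P' x * I₁ x * Real.log (P' x / Q₂ x))) →
      P = Pstar) := by
  classical
  set M : T → ℝ := fun x => min (Q₁ x) (Q₂ x) with hM
  have hMpos : ∀ x, 0 < M x := fun x => lt_min (hQ₁pos x) (hQ₂pos x)
  set Z : ℝ := ∑ y, M y with hZ
  have hZpos : 0 < Z := Finset.sum_pos (fun x _ => hMpos x) univ_nonempty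
  have hPstarpos : ∀ x, 0 < Pstar x := fun x => by
    rw [hPstar x]; exact div_pos (hMpos x) hZpos
  have hPstarsum : ∑ x, Pstar x = 1 := by
    simp only [hPstar]
    rw [← Finset.sum_div]
    exact div_self hZpos.ne'
  -- combine the two weighted terms into a single KL term against M
  have hcomb : ∀ (P : T → ℝ) (x : T),
      P x * I₂ x * Real.log (P x / Q₁ x) + P x * I₁ x * Real.log (P x / Q₂ x)
        = P x * Real.log (P x / M x) := by
    intro P x
    rw [hI₂ x, hI₁ x]
    by_cases h : Q₂ x < Q₁ x
    · simp only [if_pos h]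
      have : M x = Q₂ x := min_eq_right h.le
      rw [this]; ring
    · simp only [if_neg h]
      have : M x = Q₁ x := min_eq_left (le_of_not_gt h)
      rw [this]; ring
  have hF : ∀ (P : T → ℝ),
      (∑ x, P x * I₂ x * Real.log (P x / Q₁ x))
        + (∑ x, P x * I₁ x * Real.log (P x / Q₂ x))
        = ∑ x, P x * Real.log (P x / M x) := by
    intro P
    rw [← Finset.sum_add_distrib]
    exact Finset.sum_congr rfl fun x _ => hcomb P x
  -- decompose against Pstar
  have hdec : ∀ (P : T → ℝ), (∀ x, 0 ≤ P x) → ∑ x, P x = 1 →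
      ∑ x, P x * Real.log (P x / M x)
        = (∑ x, P x * Real.log (P x / Pstar x)) - Real.log Z := by
    intro P hPpos hPsum
    have : ∀ x, P x * Real.log (P x / M x)
        = P x * Real.log (P x / Pstar x) - P x * Real.log Z := by
      intro x
      rcases (hPpos x).eq_or_lt with h0 | h0
      · simp [← h0]
      · have hPs := hPstarpos x
        have h1 : P x / Pstar x = (P x / M x) * Z := by
          rw [hPstar x]; field_simp; rfl
        rw [h1, Real.log_mul (div_pos h0 (hMpos x)).ne' hZpos.ne']
        ring
    rw [Finset.sum_congr rfl fun x _ => this x, Finset.sum_sub_distrib,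
      ← Finset.sum_mul, hPsum, one_mul]
  -- Gibbs: KL(P‖Pstar) ≥ 0
  have hgibbs : ∀ (P : T → ℝ), (∀ x, 0 ≤ P x) → ∑ x, P x = 1 →
      0 ≤ ∑ x, P x * Real.log (P x / Pstar x) := by
    intro P hPpos hPsum
    have := Finset.sum_le_sum (fun x _ =>
      gibbs_pt_le (hPpos x) (hPstarpos x) : ∀ x ∈ univ,
        P x - Pstar x ≤ P x * Real.log (P x / Pstar x))
    rwa [Finset.sum_sub_distrib, hPsum, hPstarsum, sub_self] at this
  have hKLstar : ∑ x, Pstar x * Real.log (Pstar x / Pstar x) = 0 := by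
    apply Finset.sum_eq_zero
    intro x _
    rw [div_self (hPstarpos x).ne']
    simp
  refine ⟨⟨fun x => (hPstarpos x).le, hPstarsum⟩, ?_, ?_⟩
  · intro P hPpos hPsum
    rw [hF, hF, hdec P hPpos hPsum, hdec Pstar (fun x => (hPstarpos x).le) hPstarsum,
      hKLstar]
    have := hgibbs P hPpos hPsum
    linarith
  · intro P hPpos hPsum hmin
    have hle := hmin Pstar (fun x => (hPstarpos x).le) hPstarsum
    rw [hF, hF, hdec P hPpos hPsum,
      hdec Pstar (fun x => (hPstarpos x).le) hPstarsum, hKLstar] at hle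
    have hKL : ∑ x, P x * Real.log (P x / Pstar x) ≤ 0 := by linarith
    by_contra hne
    obtain ⟨x0, hx0⟩ := Function.ne_iff.mp hne
    have hstrict : ∑ x, (P x - Pstar x) < ∑ x, P x * Real.log (P x / Pstar x) :=
      Finset.sum_lt_sum (fun x _ => gibbs_pt_le (hPpos x) (hPstarpos x))
        ⟨x0, Finset.mem_univ x0, gibbs_pt_lt (hPpos x0) (hPstarpos x0) hx0⟩
    rw [Finset.sum_sub_distrib, hPsum, hPstarsum, sub_self] at hstrict
    linarith
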